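/- Let D ⊂ ℝ be a finite union of k ≥ 1 disjoint bounded open intervals, each of length at least r₀ and with the distance between any two of them at least r₀, and let d = diam(D) < ∞. Let V : [0,∞) → [0,∞) be a continuous, strictly increasing bijection with V(0)=0 satisfying c λ^{α/2} V(r) ≤ V(λr) ≤ C̄ λ^{ᾱ/2} V(r) for all r > 0, λ ≥ 1 (0 < α ≤ ᾱ < 2), and V(ηr) ≤ c₁ η^{α₁/2} V(r) for all 0 < η < 1, 0 < r < 1 ∨ d, with α₁ > 1. Then there is a constant C, depending only on the scaling constants, d/r₀ and 1 ∨ d, such that for every x ∈ D: ∫_ℝ [ V(|x−z|)² / ( |x−z|² · V(dist(z, ∂D)) ) ] dz ≤ C · V(δ_x)/δ_x, where δ_x = dist(x, Dᶜ). -/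

import Mathlib

open MeasureTheory Metric Set

lemma myIntegrableCompAbs {f : ℝ → ℝ} (hf : IntegrableOn f (Set.Ioi 0)) :
    Integrable (fun x => f |x|) := by
  have int_Ioi : IntegrableOn (fun x => f |x|) (Ioi 0) :=
    hf.congr_fun (fun x hx => by rw [abs_of_pos hx]) measurableSet_Ioi
  have int_Iic : IntegrableOn (fun x ↦ f |x|) (Iic 0) := by
    rw [← Measure.map_neg_eq_self (volume : Measure ℝ)]
    have m : MeasurableEmbedding fun x : ℝ => -x :=
      (Homeomorph.neg ℝ).measurableEmbedding
    rw [m.integrableOn_map_iff]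
    simp_rw [Function.comp_def, abs_neg, neg_preimage, neg_Iic, neg_zero]
    exact Iff.mpr integrableOn_Ici_iff_integrableOn_Ioi int_Ioi
  have h := int_Iic.union int_Ioi
  rwa [Set.Iic_union_Ioi, integrableOn_univ] at h

lemma myEvenPiece (f : ℝ → ℝ) (a : ℝ) (hf : IntegrableOn f (Set.Ioi 0)) :
    Integrable (fun z => f |z - a|) ∧ (∫ z, f |z - a|) = 2 * ∫ t in Set.Ioi 0, f t := by
  have h1 := myIntegrableCompAbs hf
  refine ⟨h1.comp_sub_right a, ?_⟩
  have h2 : (∫ z, (fun u => f |u|) (z - a)) = ∫ u, f |u| :=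
    integral_sub_right_eq_self (fun u => f |u|) a
  simpa [integral_comp_abs] using h2

lemma myPieceIoo (a K R β : ℝ) (hR : 0 < R) (hβ : -1 < β) :
    Integrable (fun z => (Set.Ioo 0 R).indicator (fun t => K * t ^ β) |z - a|) ∧
    (∫ z, (Set.Ioo 0 R).indicator (fun t => K * t ^ β) |z - a|) =
      2 * (K * (R ^ (β + 1) / (β + 1))) := by
  have h0 : IntervalIntegrable (fun t : ℝ => t ^ β) volume 0 R :=
    intervalIntegral.intervalIntegrable_rpow' hβ
  have h1 : IntegrableOn (fun t : ℝ => t ^ β) (Set.Ioc 0 R) :=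
    (intervalIntegrable_iff_integrableOn_Ioc_of_le hR.le).mp h0
  have hf : IntegrableOn (fun t : ℝ => K * t ^ β) (Set.Ioo 0 R) :=
    ((h1.mono_set Set.Ioo_subset_Ioc_self).const_mul K)
  have hind : Integrable ((Set.Ioo 0 R).indicator fun t => K * t ^ β) :=
    hf.integrable_indicator measurableSet_Ioo
  obtain ⟨hint, heq⟩ := myEvenPiece _ a hind.integrableOn
  refine ⟨hint, ?_⟩
  rw [heq, MeasureTheory.setIntegral_indicator measurableSet_Ioo,
    Set.inter_eq_self_of_subset_right Set.Ioo_subset_Ioi_self,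
    ← MeasureTheory.integral_Ioc_eq_integral_Ioo,
    ← intervalIntegral.integral_of_le hR.le,
    intervalIntegral.integral_const_mul, integral_rpow (Or.inl hβ),
    Real.zero_rpow (by linarith : β + 1 ≠ 0), sub_zero]

lemma myPieceIci (a K R β : ℝ) (hR : 0 < R) (hβ : β < -1) :
    Integrable (fun z => (Set.Ici R).indicator (fun t => K * t ^ β) |z - a|) ∧
    (∫ z, (Set.Ici R).indicator (fun t => K * t ^ β) |z - a|) =
      2 * (K * (-R ^ (β + 1) / (β + 1))) := by
  have h1 : IntegrableOn (fun t : ℝ => K * t ^ β) (Set.Ioi R) :=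
    (integrableOn_Ioi_rpow_of_lt hβ hR).const_mul K
  have h2 : IntegrableOn (fun t : ℝ => K * t ^ β) (Set.Ici R) :=
    Iff.mpr integrableOn_Ici_iff_integrableOn_Ioi h1
  have hind : Integrable ((Set.Ici R).indicator fun t => K * t ^ β) :=
    h2.integrable_indicator measurableSet_Ici
  obtain ⟨hint, heq⟩ := myEvenPiece _ a hind.integrableOn
  refine ⟨hint, ?_⟩
  have hsub : Set.Ici R ⊆ Set.Ioi (0:ℝ) := fun t ht => lt_of_lt_of_le hR ht
  rw [heq, MeasureTheory.setIntegral_indicator measurableSet_Ici,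
    Set.inter_eq_self_of_subset_right hsub,
    MeasureTheory.integral_Ici_eq_integral_Ioi,
    integral_const_mul, integral_Ioi_rpow_of_lt hβ hR]

set_option maxHeartbeats 1000000 in
theorem statement10 (k : ℕ) (hk : 0 < k) (p q : Fin k → ℝ) (r₀ : ℝ) (hr₀ : 0 < r₀)
    (hlen : ∀ i, r₀ ≤ q i - p i)
    (hsep : ∀ i j : Fin k, i < j → r₀ ≤ p j - q i)
    (D : Set ℝ) (hD : D = ⋃ i, Set.Ioo (p i) (q i))
    (d : ℝ) (hd : d = Metric.diam D)
    (V : ℝ → ℝ)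
    (hV0 : V 0 = 0)
    (hVcont : ContinuousOn V (Set.Ici 0))
    (hVmono : StrictMonoOn V (Set.Ici 0))
    (hVnonneg : ∀ r : ℝ, 0 ≤ r → 0 ≤ V r)
    (hVsurj : ∀ s : ℝ, 0 ≤ s → ∃ r : ℝ, 0 ≤ r ∧ V r = s)
    (α αbar c Cbar α₁ c₁ : ℝ)
    (hα : 0 < α) (hααbar : α ≤ αbar) (hαbar : αbar < 2)
    (hc : 0 < c) (hCbar : 0 < Cbar)
    (hlow : ∀ r : ℝ, 0 < r → ∀ lam : ℝ, 1 ≤ lam → c * lam ^ (α / 2) * V r ≤ V (lam * r))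
    (hup : ∀ r : ℝ, 0 < r → ∀ lam : ℝ, 1 ≤ lam → V (lam * r) ≤ Cbar * lam ^ (αbar / 2) * V r)
    (hα₁ : 1 < α₁) (hc₁ : 1 ≤ c₁)
    (hloc : ∀ η r : ℝ, 0 < η → η < 1 → 0 < r → r < max 1 d →
      V (η * r) ≤ c₁ * η ^ (α₁ / 2) * V r) :
    ∃ C : ℝ, 0 < C ∧ ∀ x ∈ D,
      (∫⁻ z : ℝ, ENNReal.ofReal
          (V |x - z| ^ 2 / (|x - z| ^ 2 * V (infDist z (frontier D))))) ≤
        ENNReal.ofReal (C * V (infDist x Dᶜ) / infDist x Dᶜ) := by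
  -- endpoints
  set e : Fin k × Bool → ℝ := fun j => if j.2 then q j.1 else p j.1 with he
  have hef : ∀ i, e (i, false) = p i := fun i => rfl
  have het : ∀ i, e (i, true) = q i := fun i => rfl
  have hpq : ∀ i, p i < q i := fun i => by have := hlen i; linarith
  have hDopen : IsOpen D := by rw [hD]; exact isOpen_iUnion fun i => isOpen_Ioo
  have hnotD : ∀ j, e j ∉ D := by
    rintro ⟨i0, b⟩ hj
    rw [hD, Set.mem_iUnion] at hj
    obtain ⟨i, hi⟩ := hj
    rcases lt_trichotomy i i0 with h | h | h
    · have h1 := hsep i i0 h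
      have h2 := hpq i0
      cases b <;> simp only [hef, het, Set.mem_Ioo] at hi <;> linarith [hi.1, hi.2]
    · subst h
      cases b <;> simp only [hef, het, Set.mem_Ioo] at hi <;> linarith [hi.1, hi.2]
    · have h1 := hsep i0 i h
      have h2 := hpq i0
      cases b <;> simp only [hef, het, Set.mem_Ioo] at hi <;> linarith [hi.1, hi.2]
  have hclosD : closure D ⊆ ⋃ i, Set.Icc (p i) (q i) :=
    closure_minimal (by rw [hD]; exact Set.iUnion_mono fun i => Set.Ioo_subset_Icc_self)
      (isClosed_iUnion_of_finite fun i => isClosed_Icc)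
  have hFe : frontier D ⊆ Set.range e := by
    intro v hv
    rw [hDopen.frontier_eq] at hv
    obtain ⟨hv1, hv2⟩ := hv
    obtain ⟨i, hi⟩ := Set.mem_iUnion.mp (hclosD hv1)
    have hnotIoo : v ∉ Set.Ioo (p i) (q i) := by
      intro hcon
      exact hv2 (by rw [hD]; exact Set.mem_iUnion.mpr ⟨i, hcon⟩)
    rcases eq_or_lt_of_le hi.1 with h | h
    · exact ⟨(i, false), h⟩
    rcases eq_or_lt_of_le hi.2 with h' | h'
    · exact ⟨(i, true), h'.symm⟩
    exact absurd ⟨h, h'⟩ hnotIoo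
  have i0 : Fin k := ⟨0, hk⟩
  have hp0F : p i0 ∈ frontier D := by
    rw [hDopen.frontier_eq]
    refine ⟨?_, hnotD (i0, false)⟩
    have h1 : p i0 ∈ closure (Set.Ioo (p i0) (q i0)) := by
      rw [closure_Ioo (hpq i0).ne]
      exact ⟨le_refl _, (hpq i0).le⟩
    exact closure_mono (by rw [hD]; exact Set.subset_iUnion (fun i => Set.Ioo (p i) (q i)) i0) h1
  have hFne : (frontier D).Nonempty := ⟨p i0, hp0F⟩
  have hFcompl : frontier D ⊆ Dᶜ := by
    rw [hDopen.frontier_eq]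
    exact fun v hv => hv.2
  have hDbdd : Bornology.IsBounded D := by
    rw [hD]
    exact Bornology.isBounded_iUnion.mpr fun i => isBounded_Ioo _ _
  have hqpd : ∀ i, q i - p i ≤ d := by
    intro i
    rw [hd, ← Real.diam_Ioo (hpq i).le]
    exact Metric.diam_mono (by rw [hD]; exact Set.subset_iUnion (fun i => Set.Ioo (p i) (q i)) i) hDbdd
  have hd0 : 0 < d := lt_of_lt_of_le hr₀ (le_trans (hlen i0) (hqpd i0))
  -- V positivity and monotonicity
  have hVpos : ∀ r : ℝ, 0 < r → 0 < V r := fun r hr => by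
    have h := hVmono Set.self_mem_Ici (Set.mem_Ici.mpr hr.le) hr
    rwa [hV0] at h
  have hVle : ∀ a b : ℝ, 0 ≤ a → a ≤ b → V a ≤ V b := fun a b ha hab =>
    hVmono.monotoneOn (Set.mem_Ici.mpr ha) (Set.mem_Ici.mpr (ha.trans hab)) hab
  have hup' : ∀ a b : ℝ, 0 < a → a ≤ b → V b ≤ Cbar * (b / a) ^ (αbar / 2) * V a := by
    intro a b ha hab
    have h := hup a ha (b / a) ((one_le_div ha).mpr hab)
    rwa [div_mul_cancel₀ _ ha.ne'] at h
  have hαb2 : αbar / 2 < 1 := by linarith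
  have hαb0 : 0 < αbar := lt_of_lt_of_le hα hααbar
  have h2αbar : (2:ℝ) ^ (αbar/2) ≤ 2 := by
    calc (2:ℝ) ^ (αbar/2) ≤ (2:ℝ) ^ (1:ℝ) :=
          Real.rpow_le_rpow_of_exponent_le one_le_two hαb2.le
    _ = 2 := Real.rpow_one 2
  have h2αbar' : (2:ℝ) ^ αbar ≤ 4 := by
    calc (2:ℝ) ^ αbar ≤ (2:ℝ) ^ (2:ℝ) :=
          Real.rpow_le_rpow_of_exponent_le one_le_two hαbar.le
    _ = 4 := by
        rw [show (2:ℝ) ^ (2:ℝ) = (2:ℝ) ^ ((2:ℕ):ℝ) by norm_num, Real.rpow_natCast]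
        norm_num
  have hα₁1 : (0:ℝ) < α₁ - 1 := by linarith
  have hαb1 : (0:ℝ) < 1 - αbar/2 := by linarith
  set C0 : ℝ := 4*c₁^2/(α₁-1) + 8*Cbar^2/(1-αbar/2) + (2*k)*(18*Cbar^4/(1-αbar/2)) with hC0
  have hc₁0 : (0:ℝ) < c₁ := lt_of_lt_of_le one_pos hc₁
  have hC0pos : 0 < C0 := by
    have h1 : (0:ℝ) < 4*c₁^2/(α₁-1) := by positivity
    have h2 : (0:ℝ) < 8*Cbar^2/(1-αbar/2) := by positivity
    have h3 : (0:ℝ) ≤ (2*(k:ℝ))*(18*Cbar^4/(1-αbar/2)) := by positivity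
    rw [hC0]; linarith
  refine ⟨C0, hC0pos, ?_⟩
  intro x hx
  have hxD := hx
  rw [hD, Set.mem_iUnion] at hxD
  obtain ⟨ix, hxi⟩ := hxD
  set δ := infDist x Dᶜ with hδdef
  have hδpos : 0 < δ := by
    rw [hδdef]
    exact (hDopen.isClosed_compl.notMem_iff_infDist_pos ⟨p i0, hnotD (i0, false)⟩).mp
      (by simpa using hx)
  have hδd : 2 * δ ≤ d := by
    have h1 : δ ≤ dist x (p ix) := infDist_le_dist_of_mem (hnotD (ix, false))
    have h2 : δ ≤ dist x (q ix) := infDist_le_dist_of_mem (hnotD (ix, true))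
    rw [Real.dist_eq, abs_of_pos (by linarith [hxi.1] : (0:ℝ) < x - p ix)] at h1
    rw [Real.dist_eq, abs_of_neg (by linarith [hxi.2] : x - q ix < 0)] at h2
    have h3 := hqpd ix
    linarith
  set R := δ / 2 with hRdef
  have hR : 0 < R := by rw [hRdef]; linarith
  have hRd : R < max 1 d := lt_of_lt_of_le (by rw [hRdef]; linarith) (le_max_right 1 d)
  set ρ : Fin k × Bool → ℝ := fun j => dist x (e j) with hρdef
  have hδρ : ∀ j, δ ≤ ρ j := fun j => infDist_le_dist_of_mem (hnotD j)
  have hρpos : ∀ j, 0 < ρ j := fun j => lt_of_lt_of_le hδpos (hδρ j)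
  have hVρδ : ∀ j, V (ρ j) ≤ Cbar * (ρ j / δ) * V δ := by
    intro j
    have h1 := hup' δ (ρ j) hδpos (hδρ j)
    have h2 : (ρ j / δ) ^ (αbar/2) ≤ ρ j / δ := by
      calc (ρ j / δ) ^ (αbar/2) ≤ (ρ j / δ) ^ (1:ℝ) :=
            Real.rpow_le_rpow_of_exponent_le ((one_le_div hδpos).mpr (hδρ j)) hαb2.le
      _ = ρ j / δ := Real.rpow_one _
    have h3 := mul_le_mul_of_nonneg_right
      (mul_le_mul_of_nonneg_left h2 hCbar.le) (hVnonneg δ hδpos.le)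
    linarith
  set KA : ℝ := c₁^2 * R ^ (-α₁) * V R with hKA
  set KB : ℝ := Cbar^2 * 2 ^ (αbar/2) * R ^ (-(αbar/2)) * V R with hKB
  set KC : Fin k × Bool → ℝ :=
    fun j => (9/4) * 2 ^ αbar * Cbar^3 * V (ρ j) * (ρ j) ^ (αbar/2 - 2) with hKC
  clear_value δ R ρ KA KB KC
  have hVRnn : 0 ≤ V R := hVnonneg R hR.le
  have hKAnn : 0 ≤ KA := by rw [hKA]; exact mul_nonneg (by positivity) hVRnn
  have hKBnn : 0 ≤ KB := by
    rw [hKB]; exact mul_nonneg (by positivity) hVRnn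
  have hKCnn : ∀ j, 0 ≤ KC j := by
    intro j
    simp only [hKC]
    exact mul_nonneg (mul_nonneg (by positivity) (hVnonneg (ρ j) (hρpos j).le))
      (Real.rpow_nonneg (hρpos j).le _)
  have hβA : (-1:ℝ) < α₁ - 2 := by linarith
  have hβB : αbar/2 - 2 < (-1:ℝ) := by linarith
  have hβC : (-1:ℝ) < -(αbar/2) := by linarith
  obtain ⟨hIA, hvA⟩ := myPieceIoo x KA R (α₁ - 2) hR hβA
  obtain ⟨hIB, hvB⟩ := myPieceIci x KB R (αbar/2 - 2) hR hβB
  have hpieceC := fun j => myPieceIoo (e j) (KC j) (ρ j) (-(αbar/2)) (hρpos j) hβC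
  have hIC : ∀ j, Integrable (fun z =>
      (Set.Ioo 0 (ρ j)).indicator (fun t => KC j * t ^ (-(αbar/2))) |z - e j|) :=
    fun j => (hpieceC j).1
  have hvC : ∀ j, (∫ z, (Set.Ioo 0 (ρ j)).indicator (fun t => KC j * t ^ (-(αbar/2))) |z - e j|)
      = 2 * (KC j * ((ρ j) ^ (-(αbar/2) + 1) / (-(αbar/2) + 1))) := fun j => (hpieceC j).2
  -- nonnegativity of the pieces (pointwise)
  have hA0 : ∀ z : ℝ, 0 ≤ (Set.Ioo 0 R).indicator (fun t => KA * t ^ (α₁ - 2)) |z - x| :=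
    fun z => Set.indicator_nonneg
      (fun t ht => mul_nonneg hKAnn (Real.rpow_nonneg ht.1.le _)) _
  have hB0 : ∀ z : ℝ, 0 ≤ (Set.Ici R).indicator (fun t => KB * t ^ (αbar/2 - 2)) |z - x| :=
    fun z => Set.indicator_nonneg
      (fun t ht => mul_nonneg hKBnn (Real.rpow_nonneg (le_trans hR.le ht) _)) _
  have hCnn : ∀ (j) (z : ℝ),
      0 ≤ (Set.Ioo 0 (ρ j)).indicator (fun t => KC j * t ^ (-(αbar/2))) |z - e j| :=
    fun j z => Set.indicator_nonneg
      (fun t ht => mul_nonneg (hKCnn j) (Real.rpow_nonneg ht.1.le _)) _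
  have hS0 : ∀ z : ℝ, 0 ≤ ∑ j : Fin k × Bool,
      (Set.Ioo 0 (ρ j)).indicator (fun t => KC j * t ^ (-(αbar/2))) |z - e j| :=
    fun z => Finset.sum_nonneg fun j _ => hCnn j z
  -- the pointwise domination
  have hkey : ∀ z : ℝ, V |x - z| ^ 2 / (|x - z| ^ 2 * V (infDist z (frontier D))) ≤
      (Set.Ioo 0 R).indicator (fun t => KA * t ^ (α₁ - 2)) |z - x| +
      ((Set.Ici R).indicator (fun t => KB * t ^ (αbar/2 - 2)) |z - x| +
        ∑ j : Fin k × Bool,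
          (Set.Ioo 0 (ρ j)).indicator (fun t => KC j * t ^ (-(αbar/2))) |z - e j|) := by
    intro z
    have hr0 : (0:ℝ) ≤ |x - z| := abs_nonneg _
    have hs0 : (0:ℝ) ≤ infDist z (frontier D) := infDist_nonneg
    set r := |x - z| with hrdef
    set s := infDist z (frontier D) with hsdef
    have hzx : |z - x| = r := by rw [hrdef, abs_sub_comm]
    have hchain : δ ≤ s + r := by
      have h1 : infDist x Dᶜ ≤ infDist z Dᶜ + dist x z := infDist_le_infDist_add_dist
      have h2 : infDist z Dᶜ ≤ s := by
        rw [hsdef]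
        exact infDist_le_infDist_of_subset hFcompl hFne
      have h3 : dist x z = r := Real.dist_eq x z
      rw [← hδdef] at h1
      linarith
    rcases eq_or_lt_of_le hr0 with hr | hrpos
    · have hzero : V r ^ 2 / (r ^ 2 * V s) = 0 := by
        rw [← hr, hV0]
        norm_num
      rw [hzero]
      exact add_nonneg (hA0 z) (add_nonneg (hB0 z) (hS0 z))
    rcases lt_or_ge r R with hcase | hcase
    · -- Region A : r < R, so s ≥ R
      have hsR : R ≤ s := by
        rw [hRdef]
        rw [hRdef] at hcase
        linarith
      have hVRpos := hVpos R hR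
      have hVr : V r ≤ c₁ * (r / R) ^ (α₁ / 2) * V R := by
        have h := hloc (r / R) R (div_pos hrpos hR) ((div_lt_one hR).mpr hcase) hR hRd
        rwa [div_mul_cancel₀ _ hR.ne'] at h
      have hb : V r ^ 2 / (r ^ 2 * V s)
          ≤ (c₁ * (r / R) ^ (α₁ / 2) * V R) ^ 2 / (r ^ 2 * V R) := by
        have hnum : V r ^ 2 ≤ (c₁ * (r / R) ^ (α₁ / 2) * V R) ^ 2 :=
          pow_le_pow_left₀ (hVnonneg r hr0) hVr 2
        have hden : r ^ 2 * V R ≤ r ^ 2 * V s :=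
          mul_le_mul_of_nonneg_left (hVle R s hR.le hsR) (sq_nonneg r)
        exact div_le_div₀ (sq_nonneg _) hnum (mul_pos (pow_pos hrpos 2) hVRpos) hden
      have heqA : (c₁ * (r / R) ^ (α₁ / 2) * V R) ^ 2 / (r ^ 2 * V R)
          = KA * r ^ (α₁ - 2) := by
        have h1 : ((r / R) ^ (α₁ / 2)) ^ 2 = r ^ α₁ * R ^ (-α₁) := by
          rw [← Real.rpow_natCast ((r / R) ^ (α₁ / 2)) 2,
            ← Real.rpow_mul (div_nonneg hr0 hR.le)]
          rw [show α₁ / 2 * ((2:ℕ):ℝ) = α₁ by push_cast; ring]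
          rw [Real.div_rpow hr0 hR.le, Real.rpow_neg hR.le, div_eq_mul_inv]
        have h2 : r ^ (α₁ - 2) = r ^ α₁ / r ^ (2:ℕ) := by
          rw [show ((r:ℝ) ^ (2:ℕ)) = r ^ ((2:ℕ):ℝ) from (Real.rpow_natCast r 2).symm,
            ← Real.rpow_sub hrpos]
          norm_num
        rw [hKA, mul_pow, mul_pow, h1, h2]
        field_simp
      have hAval : (Set.Ioo 0 R).indicator (fun t => KA * t ^ (α₁ - 2)) |z - x|
          = KA * r ^ (α₁ - 2) := by
        rw [hzx]
        exact Set.indicator_of_mem (Set.mem_Ioo.mpr ⟨hrpos, hcase⟩) _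
      have hfin := hb
      rw [heqA] at hfin
      linarith [hB0 z, hS0 z, hAval, hfin]
    rcases le_or_gt (r / 2) s with hsr | hsr
    · -- Region B : R ≤ r, s ≥ r/2
      have hr2pos : (0:ℝ) < r / 2 := by linarith
      have hVhalfpos := hVpos (r/2) hr2pos
      have hb1 : V r ≤ Cbar * 2 ^ (αbar/2) * V (r/2) := by
        have h := hup (r/2) hr2pos 2 one_le_two
        rwa [show (2:ℝ) * (r/2) = r by ring] at h
      have hb2 : V r ≤ Cbar * (r / R) ^ (αbar/2) * V R := hup' R r hR hcase
      have hVs : V (r/2) ≤ V s := hVle _ _ hr2pos.le hsr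
      have hBnn1 : (0:ℝ) ≤ Cbar * 2 ^ (αbar/2) * V (r/2) :=
        mul_nonneg (mul_nonneg hCbar.le (Real.rpow_nonneg (by norm_num) _))
          (hVnonneg _ hr2pos.le)
      have hBnn2 : (0:ℝ) ≤ Cbar * (r / R) ^ (αbar/2) * V R :=
        mul_nonneg (mul_nonneg hCbar.le
          (Real.rpow_nonneg (div_nonneg hr0 hR.le) _)) hVRnn
      have hnum : V r ^ 2
          ≤ (Cbar * 2 ^ (αbar/2) * V (r/2)) * (Cbar * (r / R) ^ (αbar/2) * V R) := by
        rw [sq]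
        exact mul_le_mul hb1 hb2 (hVnonneg r hr0) hBnn1
      have hden : r ^ 2 * V (r/2) ≤ r ^ 2 * V s :=
        mul_le_mul_of_nonneg_left hVs (sq_nonneg r)
      have hb : V r ^ 2 / (r ^ 2 * V s)
          ≤ (Cbar * 2 ^ (αbar/2) * V (r/2)) * (Cbar * (r / R) ^ (αbar/2) * V R)
            / (r ^ 2 * V (r/2)) :=
        div_le_div₀ (mul_nonneg hBnn1 hBnn2) hnum
          (mul_pos (pow_pos hrpos 2) hVhalfpos) hden
      have heqB : (Cbar * 2 ^ (αbar/2) * V (r/2)) * (Cbar * (r / R) ^ (αbar/2) * V R)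
          / (r ^ 2 * V (r/2)) = KB * r ^ (αbar/2 - 2) := by
        have h1 : (r / R) ^ (αbar/2) = r ^ (αbar/2) * R ^ (-(αbar/2)) := by
          rw [Real.rpow_neg hR.le, Real.div_rpow hr0 hR.le, div_eq_mul_inv]
        have h2 : r ^ (αbar/2 - 2) = r ^ (αbar/2) / r ^ (2:ℕ) := by
          rw [show ((r:ℝ) ^ (2:ℕ)) = r ^ ((2:ℕ):ℝ) from (Real.rpow_natCast r 2).symm,
            ← Real.rpow_sub hrpos]
          norm_num
        rw [hKB, h1, h2]
        field_simp
      have hBval : (Set.Ici R).indicator (fun t => KB * t ^ (αbar/2 - 2)) |z - x|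
          = KB * r ^ (αbar/2 - 2) := by
        rw [hzx]
        exact Set.indicator_of_mem (Set.mem_Ici.mpr hcase) _
      have hfin := hb
      rw [heqB] at hfin
      linarith [hA0 z, hS0 z, hBval, hfin]
    · -- Region C : R ≤ r, s < r/2
      rcases eq_or_lt_of_le hs0 with hs | hspos
      · have hzero : V r ^ 2 / (r ^ 2 * V s) = 0 := by
          rw [← hs, hV0, mul_zero, div_zero]
        rw [hzero]
        exact add_nonneg (hA0 z) (add_nonneg (hB0 z) (hS0 z))
      obtain ⟨w, hwF, hws⟩ := isClosed_frontier.exists_infDist_eq_dist hFne z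
      obtain ⟨j, hj⟩ := hFe hwF
      have hsw : s = |z - e j| := by rw [hsdef, hws, ← hj, Real.dist_eq]
      have hρj : ρ j = dist x (e j) := by simp only [hρdef]
      have hxz : dist x z = r := Real.dist_eq x z
      have hez : dist (e j) z = s := by rw [dist_comm, Real.dist_eq, ← hsw]
      have hze : dist z (e j) = s := by rw [Real.dist_eq, ← hsw]
      have htri1 : r ≤ ρ j + s := by
        have h := dist_triangle x (e j) z
        rw [hxz, ← hρj, hez] at h
        exact h
      have htri2 : ρ j ≤ r + s := by
        have h := dist_triangle x z (e j)
        rw [← hρj, hxz, hze] at h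
        exact h
      have hrρ : r ≤ 2 * ρ j := by linarith
      have hρr : 2/3 * ρ j ≤ r := by linarith
      have hsρ : s < ρ j := by linarith
      have hρpos' := hρpos j
      have hVspos := hVpos s hspos
      have hVρnn := hVnonneg (ρ j) hρpos'.le
      have hVr2ρ : V r ≤ Cbar * 2 ^ (αbar/2) * V (ρ j) := by
        have h := hup (ρ j) hρpos' 2 one_le_two
        have h2 := hVle r (2 * ρ j) hr0 hrρ
        linarith
      have hVρs : V (ρ j) ≤ Cbar * (ρ j / s) ^ (αbar/2) * V s := hup' s (ρ j) hspos hsρ.le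
      have h2s : ((2:ℝ) ^ (αbar/2)) ^ 2 = 2 ^ αbar := by
        rw [← Real.rpow_natCast ((2:ℝ) ^ (αbar/2)) 2,
          ← Real.rpow_mul (by norm_num : (0:ℝ) ≤ 2)]
        rw [show αbar / 2 * ((2:ℕ):ℝ) = αbar by push_cast; ring]
      have hnum : V r ^ 2
          ≤ (Cbar^2 * 2 ^ αbar * V (ρ j)) * (Cbar * (ρ j / s) ^ (αbar/2) * V s) := by
        have e1 : (Cbar * 2 ^ (αbar/2) * V (ρ j)) ^ 2
            = (Cbar^2 * (((2:ℝ) ^ (αbar/2)) ^ 2) * V (ρ j)) * V (ρ j) := by ring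
        have h1 : V r ^ 2 ≤ (Cbar * 2 ^ (αbar/2) * V (ρ j)) ^ 2 :=
          pow_le_pow_left₀ (hVnonneg r hr0) hVr2ρ 2
        rw [e1, h2s] at h1
        refine h1.trans ?_
        exact mul_le_mul_of_nonneg_left hVρs
          (mul_nonneg (by positivity) hVρnn)
      have hden : (2/3 * ρ j) ^ 2 * V s ≤ r ^ 2 * V s :=
        mul_le_mul_of_nonneg_right
          (pow_le_pow_left₀ (by linarith) hρr 2) hVspos.le
      have hdenpos : (0:ℝ) < (2/3 * ρ j) ^ 2 * V s :=
        mul_pos (pow_pos (by linarith) 2) hVspos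
      have hb : V r ^ 2 / (r ^ 2 * V s)
          ≤ ((Cbar^2 * 2 ^ αbar * V (ρ j)) * (Cbar * (ρ j / s) ^ (αbar/2) * V s))
            / ((2/3 * ρ j) ^ 2 * V s) :=
        div_le_div₀
          (mul_nonneg (mul_nonneg (by positivity) hVρnn)
            (mul_nonneg (mul_nonneg hCbar.le
              (Real.rpow_nonneg (div_nonneg hρpos'.le hspos.le) _)) (hVnonneg s hs0)))
          hnum hdenpos hden
      have heqC : ((Cbar^2 * 2 ^ αbar * V (ρ j)) * (Cbar * (ρ j / s) ^ (αbar/2) * V s))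
          / ((2/3 * ρ j) ^ 2 * V s) = KC j * s ^ (-(αbar/2)) := by
        have h1 : (ρ j / s) ^ (αbar/2) = ρ j ^ (αbar/2) * s ^ (-(αbar/2)) := by
          rw [Real.rpow_neg hspos.le, Real.div_rpow hρpos'.le hspos.le, div_eq_mul_inv]
        have h2 : (ρ j) ^ (αbar/2 - 2) = ρ j ^ (αbar/2) / (ρ j) ^ (2:ℕ) := by
          rw [show (((ρ j):ℝ) ^ (2:ℕ)) = (ρ j) ^ ((2:ℕ):ℝ) from (Real.rpow_natCast _ 2).symm,
            ← Real.rpow_sub hρpos']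
          norm_num
        simp only [hKC]
        rw [h1, h2]
        field_simp [hρpos'.ne', hVspos.ne']
        ring
      have hCval : (Set.Ioo 0 (ρ j)).indicator (fun t => KC j * t ^ (-(αbar/2))) |z - e j|
          = KC j * s ^ (-(αbar/2)) := by
        rw [← hsw]
        exact Set.indicator_of_mem (Set.mem_Ioo.mpr ⟨hspos, hsρ⟩) _
      have hsum_ge : KC j * s ^ (-(αbar/2)) ≤ ∑ j' : Fin k × Bool,
          (Set.Ioo 0 (ρ j')).indicator (fun t => KC j' * t ^ (-(αbar/2))) |z - e j'| := by
        rw [← hCval]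
        exact Finset.single_le_sum (fun j' _ => hCnn j' z) (Finset.mem_univ j)
      have hfin := hb
      rw [heqC] at hfin
      linarith [hA0 z, hB0 z, hsum_ge, hfin]
  -- integrability of the dominating function
  have hHint : Integrable (fun z =>
      (Set.Ioo 0 R).indicator (fun t => KA * t ^ (α₁ - 2)) |z - x| +
      ((Set.Ici R).indicator (fun t => KB * t ^ (αbar/2 - 2)) |z - x| +
        ∑ j : Fin k × Bool,
          (Set.Ioo 0 (ρ j)).indicator (fun t => KC j * t ^ (-(αbar/2))) |z - e j|)) :=
    hIA.add (hIB.add (integrable_finset_sum Finset.univ fun j _ => hIC j))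
  -- value of the integral and final bound
  have hval : (∫ z, ((Set.Ioo 0 R).indicator (fun t => KA * t ^ (α₁ - 2)) |z - x| +
      ((Set.Ici R).indicator (fun t => KB * t ^ (αbar/2 - 2)) |z - x| +
        ∑ j : Fin k × Bool,
          (Set.Ioo 0 (ρ j)).indicator (fun t => KC j * t ^ (-(αbar/2))) |z - e j|)))
      ≤ C0 * (V δ / δ) := by
    have hISum : Integrable (fun z => ∑ j : Fin k × Bool,
        (Set.Ioo 0 (ρ j)).indicator (fun t => KC j * t ^ (-(αbar/2))) |z - e j|) :=
      integrable_finset_sum Finset.univ fun j _ => hIC j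
    have hintsum : (∫ z, ∑ j : Fin k × Bool,
        (Set.Ioo 0 (ρ j)).indicator (fun t => KC j * t ^ (-(αbar/2))) |z - e j|)
        = ∑ j : Fin k × Bool, ∫ z,
        (Set.Ioo 0 (ρ j)).indicator (fun t => KC j * t ^ (-(αbar/2))) |z - e j| :=
      integral_finset_sum Finset.univ fun j _ => hIC j
    have hsumeq : (∑ j : Fin k × Bool, ∫ z,
        (Set.Ioo 0 (ρ j)).indicator (fun t => KC j * t ^ (-(αbar/2))) |z - e j|)
        = ∑ j : Fin k × Bool, 2 * (KC j * ((ρ j) ^ (-(αbar/2) + 1) / (-(αbar/2) + 1))) :=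
      Finset.sum_congr rfl fun j _ => hvC j
    have hadd : (∫ z, ((Set.Ioo 0 R).indicator (fun t => KA * t ^ (α₁ - 2)) |z - x| +
        ((Set.Ici R).indicator (fun t => KB * t ^ (αbar/2 - 2)) |z - x| +
          ∑ j : Fin k × Bool,
            (Set.Ioo 0 (ρ j)).indicator (fun t => KC j * t ^ (-(αbar/2))) |z - e j|)))
        = (∫ z, (Set.Ioo 0 R).indicator (fun t => KA * t ^ (α₁ - 2)) |z - x|) +
          ((∫ z, (Set.Ici R).indicator (fun t => KB * t ^ (αbar/2 - 2)) |z - x|) +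
           (∫ z, ∑ j : Fin k × Bool,
             (Set.Ioo 0 (ρ j)).indicator (fun t => KC j * t ^ (-(αbar/2))) |z - e j|)) := by
      have h1 := integral_add hIA (hIB.add hISum)
      have h2 := integral_add hIB hISum
      simp only [Pi.add_apply] at h1
      rw [h1, h2]
    rw [hadd, hintsum, hsumeq, hvA, hvB]
    -- bound the three contributions
    have hVRδ : V R ≤ V δ := hVle R δ hR.le (by rw [hRdef]; linarith)
    have hbA : 2 * (KA * (R ^ (α₁ - 2 + 1) / (α₁ - 2 + 1))) ≤ 4*c₁^2/(α₁-1) * (V δ / δ) := by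
      have e1 : R ^ (-α₁) * R ^ (α₁ - 2 + 1) = 2 / δ := by
        rw [← Real.rpow_add hR, show -α₁ + (α₁ - 2 + 1) = -1 by ring, Real.rpow_neg_one,
          hRdef, inv_div]
      have heq : 2 * (KA * (R ^ (α₁ - 2 + 1) / (α₁ - 2 + 1))) = 4*c₁^2/(α₁-1) * (V R / δ) := by
        rw [hKA]
        calc 2 * (c₁^2 * R ^ (-α₁) * V R * (R ^ (α₁ - 2 + 1) / (α₁ - 2 + 1)))
            = (R ^ (-α₁) * R ^ (α₁ - 2 + 1)) * (2 * c₁^2 * V R / (α₁ - 2 + 1)) := by ring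
          _ = (2/δ) * (2 * c₁^2 * V R / (α₁ - 2 + 1)) := by rw [e1]
          _ = 4*c₁^2/(α₁-1) * (V R / δ) := by
              rw [show α₁ - 2 + 1 = α₁ - 1 by ring]
              field_simp
              ring
      rw [heq]
      have hnn : (0:ℝ) ≤ 4*c₁^2/(α₁-1) := div_nonneg (by positivity) hα₁1.le
      exact mul_le_mul_of_nonneg_left
        (div_le_div₀ (hVnonneg δ hδpos.le) hVRδ hδpos le_rfl) hnn
    have hbB : 2 * (KB * (-R ^ (αbar/2 - 2 + 1) / (αbar/2 - 2 + 1)))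
        ≤ 8*Cbar^2/(1-αbar/2) * (V δ / δ) := by
      have e2 : R ^ (-(αbar/2)) * R ^ (αbar/2 - 2 + 1) = 2 / δ := by
        rw [← Real.rpow_add hR, show -(αbar/2) + (αbar/2 - 2 + 1) = -1 by ring,
          Real.rpow_neg_one, hRdef, inv_div]
      have heq : 2 * (KB * (-R ^ (αbar/2 - 2 + 1) / (αbar/2 - 2 + 1)))
          = (4*Cbar^2*2^(αbar/2)/(1-αbar/2)) * (V R / δ) := by
        rw [hKB]
        calc 2 * (Cbar^2 * 2^(αbar/2) * R ^ (-(αbar/2)) * V R *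
                (-R ^ (αbar/2 - 2 + 1) / (αbar/2 - 2 + 1)))
            = (R ^ (-(αbar/2)) * R ^ (αbar/2 - 2 + 1)) *
                (-(2 * Cbar^2 * 2^(αbar/2) * V R) / (αbar/2 - 2 + 1)) := by ring
          _ = (2/δ) * (-(2 * Cbar^2 * 2^(αbar/2) * V R) / (αbar/2 - 2 + 1)) := by rw [e2]
          _ = (2/δ) * ((2 * Cbar^2 * 2^(αbar/2) * V R) / (1-αbar/2)) := by
              rw [show αbar/2 - 2 + 1 = -(1-αbar/2) by ring, neg_div_neg_eq]
          _ = (4*Cbar^2*2^(αbar/2)/(1-αbar/2)) * (V R / δ) := by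
              field_simp [hδpos.ne', ne_of_gt hαb1]
              ring
      rw [heq]
      have hf1 : (4*Cbar^2*2^(αbar/2)/(1-αbar/2)) ≤ 8*Cbar^2/(1-αbar/2) := by
        apply div_le_div₀ (by positivity) ?_ hαb1 le_rfl
        have h := mul_le_mul_of_nonneg_left h2αbar (by positivity : (0:ℝ) ≤ 4*Cbar^2)
        linarith
      have hf2 : V R / δ ≤ V δ / δ :=
        div_le_div₀ (hVnonneg δ hδpos.le) hVRδ hδpos le_rfl
      exact mul_le_mul hf1 hf2 (div_nonneg hVRnn hδpos.le)
        (div_nonneg (by positivity) hαb1.le)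
    have hbC : ∀ j, 2 * (KC j * ((ρ j) ^ (-(αbar/2) + 1) / (-(αbar/2) + 1)))
        ≤ 18*Cbar^4/(1-αbar/2) * (V δ / δ) := by
      intro j
      have e3 : (ρ j) ^ (αbar/2 - 2) * (ρ j) ^ (-(αbar/2) + 1) = (ρ j)⁻¹ := by
        rw [← Real.rpow_add (hρpos j), show αbar/2 - 2 + (-(αbar/2) + 1) = -1 by ring,
          Real.rpow_neg_one]
      have heq : 2 * (KC j * ((ρ j) ^ (-(αbar/2) + 1) / (-(αbar/2) + 1))) =
          ((9/2) * 2^αbar * Cbar^3 / (1-αbar/2)) * (V (ρ j) * (ρ j)⁻¹) := by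
        simp only [hKC]
        calc 2 * ((9/4) * 2^αbar * Cbar^3 * V (ρ j) * (ρ j) ^ (αbar/2 - 2) *
                ((ρ j) ^ (-(αbar/2) + 1) / (-(αbar/2) + 1)))
            = ((ρ j) ^ (αbar/2 - 2) * (ρ j) ^ (-(αbar/2) + 1)) *
                (2 * (9/4) * 2^αbar * Cbar^3 * V (ρ j) / (-(αbar/2) + 1)) := by ring
          _ = (ρ j)⁻¹ * (2 * (9/4) * 2^αbar * Cbar^3 * V (ρ j) / (-(αbar/2) + 1)) := by rw [e3]
          _ = ((9/2) * 2^αbar * Cbar^3 / (1-αbar/2)) * (V (ρ j) * (ρ j)⁻¹) := by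
              rw [show -(αbar/2) + 1 = 1-αbar/2 by ring]
              ring
      rw [heq]
      have hρVδ : V (ρ j) * (ρ j)⁻¹ ≤ Cbar * (V δ / δ) := by
        have h1 := mul_le_mul_of_nonneg_right (hVρδ j) (inv_nonneg.mpr (hρpos j).le)
        have h2 : Cbar * (ρ j / δ) * V δ * (ρ j)⁻¹ = Cbar * (V δ / δ) := by
          field_simp [hδpos.ne', (hρpos j).ne']
        rwa [h2] at h1
      have hf1 : (9/2) * 2^αbar * Cbar^3 / (1-αbar/2) ≤ 18*Cbar^3/(1-αbar/2) := by
        apply div_le_div₀ (by positivity) ?_ hαb1 le_rfl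
        have h := mul_le_mul_of_nonneg_left h2αbar' (by positivity : (0:ℝ) ≤ (9/2)*Cbar^3)
        linarith
      have hnn1 : 0 ≤ V (ρ j) * (ρ j)⁻¹ :=
        mul_nonneg (hVnonneg _ (hρpos j).le) (inv_nonneg.mpr (hρpos j).le)
      calc ((9/2) * 2^αbar * Cbar^3 / (1-αbar/2)) * (V (ρ j) * (ρ j)⁻¹)
          ≤ (18*Cbar^3/(1-αbar/2)) * (Cbar * (V δ / δ)) :=
            mul_le_mul hf1 hρVδ hnn1 (div_nonneg (by positivity) hαb1.le)
        _ = 18*Cbar^4/(1-αbar/2) * (V δ / δ) := by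
            field_simp [ne_of_gt hαb1, hδpos.ne']
    have hsum : (∑ j : Fin k × Bool, 2 * (KC j * ((ρ j) ^ (-(αbar/2) + 1) / (-(αbar/2) + 1))))
        ≤ (2*(k:ℝ)) * (18*Cbar^4/(1-αbar/2) * (V δ / δ)) := by
      calc (∑ j : Fin k × Bool, 2 * (KC j * ((ρ j) ^ (-(αbar/2) + 1) / (-(αbar/2) + 1))))
          ≤ ∑ _j : Fin k × Bool, 18*Cbar^4/(1-αbar/2) * (V δ / δ) :=
            Finset.sum_le_sum fun j _ => hbC j
        _ = (2*(k:ℝ)) * (18*Cbar^4/(1-αbar/2) * (V δ / δ)) := by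
            rw [Finset.sum_const, Finset.card_univ]
            simp only [Fintype.card_prod, Fintype.card_fin, Fintype.card_bool, nsmul_eq_mul]
            push_cast
            ring
    have hfinal : 4*c₁^2/(α₁-1) * (V δ / δ) + 8*Cbar^2/(1-αbar/2) * (V δ / δ) +
        (2*(k:ℝ)) * (18*Cbar^4/(1-αbar/2) * (V δ / δ)) = C0 * (V δ / δ) := by
      rw [hC0]
      ring
    linarith [hbA, hbB, hsum]
  calc (∫⁻ z : ℝ, ENNReal.ofReal
          (V |x - z| ^ 2 / (|x - z| ^ 2 * V (infDist z (frontier D)))))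
      ≤ ∫⁻ z : ℝ, ENNReal.ofReal
          ((Set.Ioo 0 R).indicator (fun t => KA * t ^ (α₁ - 2)) |z - x| +
          ((Set.Ici R).indicator (fun t => KB * t ^ (αbar/2 - 2)) |z - x| +
            ∑ j : Fin k × Bool,
              (Set.Ioo 0 (ρ j)).indicator (fun t => KC j * t ^ (-(αbar/2))) |z - e j|)) :=
        lintegral_mono fun z => ENNReal.ofReal_le_ofReal (hkey z)
    _ = ENNReal.ofReal (∫ z, ((Set.Ioo 0 R).indicator (fun t => KA * t ^ (α₁ - 2)) |z - x| +
          ((Set.Ici R).indicator (fun t => KB * t ^ (αbar/2 - 2)) |z - x| +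
            ∑ j : Fin k × Bool,
              (Set.Ioo 0 (ρ j)).indicator (fun t => KC j * t ^ (-(αbar/2))) |z - e j|))) :=
        (ofReal_integral_eq_lintegral_ofReal hHint
          (Filter.Eventually.of_forall fun z =>
            add_nonneg (hA0 z) (add_nonneg (hB0 z) (hS0 z)))).symm
    _ ≤ ENNReal.ofReal (C0 * V δ / δ) := by
        apply ENNReal.ofReal_le_ofReal
        rw [mul_div_assoc]
        exact hval
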